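/- arXiv:2103.08241 — 7 statements merged into one kernel-verified Lean document; each statement's English description precedes it below -/
import Mathlib

section
/- Let M be a finite MDP with N states and A actions with nonnegative rewards r(s,a), and let r̄ = max_{s,a} r(s,a). Let π^C be a myopic policy, i.e. a deterministic policy with r(s, π^C(s)) = max_a r(s,a) for every state s, let P_C be its induced transition matrix, and assume τ₁(P_C) < 1. Let w_C be a stationary distribution of P_C and set g^C = Σ_s (w_C)_s · r(s, π^C(s)). Then for every Markov randomized policy π and every stationary distribution w_π of the induced matrix P_π, the gain g_π = Σ_s (w_π)_s (r_π)_s satisfies g_π − g^C ≤ r̄ · ρ(M, P_C) / (1 − τ₁(P_C)). -/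
open Finset

/-- Coefficient of ergodicity τ₁ of a row-stochastic matrix. -/
noncomputable def tau1 {N : ℕ} (P : Fin N → Fin N → ℝ) : ℝ :=
  (1 / 2) * ⨆ i, ⨆ j, ∑ k, |P i k - P j k|

/-- ρ(M, Y) for an MDP with transition probabilities `P a i j = P(j | i, a)`. -/
noncomputable def rho {N A : ℕ} (P : Fin A → Fin N → Fin N → ℝ)
    (Y : Fin N → Fin N → ℝ) : ℝ :=
  ⨆ i, ∑ j, (((⨆ a, P a i j) - ⨅ a, P a i j) / 2 +
    |Y i j - ((⨆ a, P a i j) + (⨅ a, P a i j)) / 2|)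

/-- The optimal policy outperforms the myopic policy by at most
`r̄ · ρ(M, P_C) / (1 − τ₁(P_C))`. -/
theorem myopic_gain_gap_bound {N A : ℕ} [NeZero N] [NeZero A]
    (P : Fin A → Fin N → Fin N → ℝ)
    (hPnn : ∀ a i j, 0 ≤ P a i j)
    (hProw : ∀ a i, ∑ j, P a i j = 1)
    (r : Fin N → Fin A → ℝ)
    (hrnn : ∀ s a, 0 ≤ r s a)
    (rbar : ℝ) (hrbar : rbar = ⨆ s, ⨆ a, r s a)
    (piC : Fin N → Fin A)
    (hmyopic : ∀ s a, r s a ≤ r s (piC s))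
    (PC : Fin N → Fin N → ℝ) (hPC : ∀ i j, PC i j = P (piC i) i j)
    (htau : tau1 PC < 1)
    (wC : Fin N → ℝ) (hwCnn : ∀ s, 0 ≤ wC s) (hwCsum : ∑ s, wC s = 1)
    (hwCstat : ∀ j, ∑ i, wC i * PC i j = wC j)
    (gC : ℝ) (hgC : gC = ∑ s, wC s * r s (piC s))
    (pol : Fin N → Fin A → ℝ)
    (hpolnn : ∀ s a, 0 ≤ pol s a) (hpolrow : ∀ s, ∑ a, pol s a = 1)
    (Ppol : Fin N → Fin N → ℝ) (hPpol : ∀ i j, Ppol i j = ∑ a, pol i a * P a i j)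
    (wpol : Fin N → ℝ) (hwpolnn : ∀ s, 0 ≤ wpol s) (hwpolsum : ∑ s, wpol s = 1)
    (hwpolstat : ∀ j, ∑ i, wpol i * Ppol i j = wpol j)
    (gpol : ℝ) (hgpol : gpol = ∑ s, wpol s * (∑ a, pol s a * r s a)) :
    gpol - gC ≤ rbar * rho P PC / (1 - tau1 PC) := by
  classical
  have hNne : Nonempty (Fin N) := ⟨⟨0, Nat.pos_of_ne_zero (NeZero.ne N)⟩⟩
  have hAne : Nonempty (Fin A) := ⟨⟨0, Nat.pos_of_ne_zero (NeZero.ne A)⟩⟩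
  have bddN : ∀ (f : Fin N → ℝ), BddAbove (Set.range f) :=
    fun f => (Set.finite_range f).bddAbove
  have bddA : ∀ (f : Fin A → ℝ), BddAbove (Set.range f) :=
    fun f => (Set.finite_range f).bddAbove
  have bddAb : ∀ (f : Fin A → ℝ), BddBelow (Set.range f) :=
    fun f => (Set.finite_range f).bddBelow
  set τ := tau1 PC with hτdef
  have hτpos : 0 < 1 - τ := by linarith
  -- pairwise row distance bound
  have pairbd : ∀ i k, (∑ j, |PC i j - PC k j|) ≤ 2 * τ := by
    intro i k
    have h1 : (∑ j, |PC i j - PC k j|) ≤ ⨆ j', ∑ l, |PC i l - PC j' l| :=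
      le_ciSup (f := fun j' => ∑ l, |PC i l - PC j' l|) (bddN _) k
    have h2 : (⨆ j', ∑ l, |PC i l - PC j' l|) ≤
        ⨆ i', ⨆ j', ∑ l, |PC i' l - PC j' l| :=
      le_ciSup (f := fun i' => ⨆ j', ∑ l, |PC i' l - PC j' l|) (bddN _) i
    have h3 := h1.trans h2
    rw [hτdef, tau1]; linarith
  have hτ0 : 0 ≤ τ := by
    obtain ⟨i⟩ := hNne
    have := pairbd i i
    simp only [sub_self, abs_zero, Finset.sum_const_zero] at this
    linarith
  -- v and its decomposition
  set v : Fin N → ℝ := fun i => wpol i - wC i with hv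
  set vp : Fin N → ℝ := fun i => max (v i) 0 with hvp
  set vm : Fin N → ℝ := fun i => max (-v i) 0 with hvm
  have hvp0 : ∀ i, 0 ≤ vp i := fun i => le_max_right _ _
  have hvm0 : ∀ i, 0 ≤ vm i := fun i => le_max_right _ _
  have hvdec : ∀ i, v i = vp i - vm i := by
    intro i
    rcases le_total (v i) 0 with h | h
    · have h1 : vp i = 0 := max_eq_right h
      have h2 : vm i = -v i := max_eq_left (by linarith)
      rw [h1, h2]; ring
    · have h1 : vp i = v i := max_eq_left h
      have h2 : vm i = 0 := max_eq_right (by linarith)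
      rw [h1, h2]; ring
  have habs : ∀ i, |v i| = vp i + vm i := by
    intro i
    rcases le_total (v i) 0 with h | h
    · have h1 : vp i = 0 := max_eq_right h
      have h2 : vm i = -v i := max_eq_left (by linarith)
      rw [abs_of_nonpos h, h1, h2]; ring
    · have h1 : vp i = v i := max_eq_left h
      have h2 : vm i = 0 := max_eq_right (by linarith)
      rw [abs_of_nonneg h, h1, h2]; ring
  have hsumv : ∑ i, v i = 0 := by
    simp only [hv]
    rw [Finset.sum_sub_distrib, hwpolsum, hwCsum]; ring
  set c := ∑ i, vp i with hc
  have hc0 : 0 ≤ c := Finset.sum_nonneg fun i _ => hvp0 i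
  have hsumvm : ∑ i, vm i = c := by
    have h : ∑ i, (vp i - vm i) = 0 := by
      rw [Finset.sum_congr rfl fun i _ => (hvdec i).symm]; exact hsumv
    rw [Finset.sum_sub_distrib] at h
    linarith
  have habs_sum : ∑ i, |v i| = 2 * c := by
    calc ∑ i, |v i| = ∑ i, (vp i + vm i) := Finset.sum_congr rfl fun i _ => habs i
      _ = c + c := by rw [Finset.sum_add_distrib, hsumvm]
      _ = 2 * c := by ring
  -- contraction: ∑_j |(v PC)_j| ≤ τ ∑ |v|
  have contraction : ∑ j, |∑ i, v i * PC i j| ≤ τ * ∑ i, |v i| := by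
    rcases eq_or_lt_of_le hc0 with hceq | hcpos
    · -- c = 0 ⇒ v = 0
      have hvz : ∀ i, v i = 0 := by
        intro i
        have hvpz : vp i = 0 := by
          have := (Finset.sum_eq_zero_iff_of_nonneg (fun i _ => hvp0 i)).mp hceq.symm
          exact this i (Finset.mem_univ i)
        have hvmz : vm i = 0 := by
          have := (Finset.sum_eq_zero_iff_of_nonneg (fun i _ => hvm0 i)).mp
            (by rw [hsumvm]; exact hceq.symm)
          exact this i (Finset.mem_univ i)
        rw [hvdec i, hvpz, hvmz]; ring
      have : ∀ j, (∑ i, v i * PC i j) = 0 := by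
        intro j; apply Finset.sum_eq_zero; intro i _; rw [hvz i]; ring
      simp only [this, abs_zero, Finset.sum_const_zero]
      have : ∑ i, |v i| = 0 := by
        apply Finset.sum_eq_zero; intro i _; rw [hvz i, abs_zero]
      rw [this]; simp
    · -- c > 0
      have key : ∀ j, c * (∑ i, v i * PC i j)
          = ∑ i, ∑ k, vp i * vm k * (PC i j - PC k j) := by
        intro j
        have expand : ∀ i, ∑ k, vp i * vm k * (PC i j - PC k j)
            = vp i * PC i j * c - vp i * (∑ k, vm k * PC k j) := by
          intro i
          have : ∀ k, vp i * vm k * (PC i j - PC k j)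
              = vp i * PC i j * vm k - vp i * (vm k * PC k j) := by
            intro k; ring
          rw [Finset.sum_congr rfl fun k _ => this k, Finset.sum_sub_distrib,
            ← Finset.mul_sum, ← Finset.mul_sum, hsumvm]
        rw [Finset.sum_congr rfl fun i _ => expand i, Finset.sum_sub_distrib,
          ← Finset.sum_mul, ← Finset.sum_mul]
        have hvsplit : (∑ i, v i * PC i j)
            = (∑ i, vp i * PC i j) - ∑ i, vm i * PC i j := by
          rw [← Finset.sum_sub_distrib]
          apply Finset.sum_congr rfl; intro i _; rw [hvdec i]; ring
        rw [hvsplit, ← hc]; ring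
      have hjbound : ∀ j, c * |∑ i, v i * PC i j|
          ≤ ∑ i, ∑ k, vp i * vm k * |PC i j - PC k j| := by
        intro j
        calc c * |∑ i, v i * PC i j| = |c * ∑ i, v i * PC i j| := by
              rw [abs_mul, abs_of_nonneg hc0]
          _ = |∑ i, ∑ k, vp i * vm k * (PC i j - PC k j)| := by rw [key j]
          _ ≤ ∑ i, |∑ k, vp i * vm k * (PC i j - PC k j)| :=
              Finset.abs_sum_le_sum_abs _ _
          _ ≤ ∑ i, ∑ k, |vp i * vm k * (PC i j - PC k j)| :=
              Finset.sum_le_sum fun i _ => Finset.abs_sum_le_sum_abs _ _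
          _ = ∑ i, ∑ k, vp i * vm k * |PC i j - PC k j| := by
              apply Finset.sum_congr rfl; intro i _
              apply Finset.sum_congr rfl; intro k _
              rw [abs_mul, abs_mul, abs_of_nonneg (hvp0 i), abs_of_nonneg (hvm0 k)]
      have hbig : c * (∑ j, |∑ i, v i * PC i j|) ≤ c * (2 * τ * c) := by
        calc c * (∑ j, |∑ i, v i * PC i j|) = ∑ j, c * |∑ i, v i * PC i j| :=
              Finset.mul_sum _ _ _
          _ ≤ ∑ j, ∑ i, ∑ k, vp i * vm k * |PC i j - PC k j| :=
              Finset.sum_le_sum fun j _ => hjbound j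
          _ = ∑ i, ∑ k, vp i * vm k * (∑ j, |PC i j - PC k j|) := by
              rw [Finset.sum_comm]
              apply Finset.sum_congr rfl; intro i _
              rw [Finset.sum_comm]
              apply Finset.sum_congr rfl; intro k _
              rw [Finset.mul_sum]
          _ ≤ ∑ i, ∑ k, vp i * vm k * (2 * τ) := by
              apply Finset.sum_le_sum; intro i _
              apply Finset.sum_le_sum; intro k _
              exact mul_le_mul_of_nonneg_left (pairbd i k)
                (mul_nonneg (hvp0 i) (hvm0 k))
          _ = c * (2 * τ * c) := by
              calc ∑ i, ∑ k, vp i * vm k * (2 * τ)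
                  = ∑ i, (2 * τ * vp i) * ∑ k, vm k := by
                    apply Finset.sum_congr rfl; intro i _
                    rw [Finset.mul_sum]
                    apply Finset.sum_congr rfl; intro k _; ring
                _ = c * (2 * τ * c) := by
                    rw [hsumvm, ← Finset.sum_mul, ← Finset.mul_sum, ← hc]; ring
      have hres := (mul_le_mul_iff_right₀ hcpos).mp hbig
      rw [habs_sum]
      calc ∑ j, |∑ i, v i * PC i j| ≤ 2 * τ * c := hres
        _ = τ * (2 * c) := by ring
  -- row bound: each row of |Ppol - PC| is at most rho
  have rowbd : ∀ i, (∑ j, |Ppol i j - PC i j|) ≤ rho P PC := by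
    intro i
    have hterm : ∀ j, |Ppol i j - PC i j| ≤
        ((⨆ a, P a i j) - ⨅ a, P a i j) / 2 +
          |PC i j - ((⨆ a, P a i j) + (⨅ a, P a i j)) / 2| := by
      intro j
      set hi := ⨆ a, P a i j with hhi
      set lo := ⨅ a, P a i j with hlo
      have hub : Ppol i j ≤ hi := by
        rw [hPpol]
        calc ∑ a, pol i a * P a i j ≤ ∑ a, pol i a * hi := by
              apply Finset.sum_le_sum; intro a _
              exact mul_le_mul_of_nonneg_left (le_ciSup (f := fun a => P a i j) (bddA _) a) (hpolnn i a)
          _ = hi := by rw [← Finset.sum_mul, hpolrow, one_mul]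
      have hlb : lo ≤ Ppol i j := by
        rw [hPpol]
        calc lo = ∑ a, pol i a * lo := by rw [← Finset.sum_mul, hpolrow, one_mul]
          _ ≤ ∑ a, pol i a * P a i j := by
              apply Finset.sum_le_sum; intro a _
              exact mul_le_mul_of_nonneg_left (ciInf_le (f := fun a => P a i j) (bddAb _) a) (hpolnn i a)
      have h1 : |Ppol i j - (hi + lo) / 2| ≤ (hi - lo) / 2 :=
        abs_le.mpr ⟨by linarith, by linarith⟩
      calc |Ppol i j - PC i j|
          ≤ |Ppol i j - (hi + lo) / 2| + |(hi + lo) / 2 - PC i j| :=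
            abs_sub_le _ _ _
        _ ≤ (hi - lo) / 2 + |PC i j - (hi + lo) / 2| := by
            rw [abs_sub_comm ((hi + lo) / 2)]; linarith
    calc (∑ j, |Ppol i j - PC i j|)
        ≤ ∑ j, (((⨆ a, P a i j) - ⨅ a, P a i j) / 2 +
            |PC i j - ((⨆ a, P a i j) + (⨅ a, P a i j)) / 2|) :=
          Finset.sum_le_sum fun j _ => hterm j
      _ ≤ rho P PC := by
          rw [rho]
          exact le_ciSup (f := fun i => ∑ j, (((⨆ a, P a i j) - ⨅ a, P a i j) / 2 +
            |PC i j - ((⨆ a, P a i j) + (⨅ a, P a i j)) / 2|)) (bddN _) i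
  -- perturbation decomposition
  have hvstat : ∀ j, v j = (∑ i, v i * PC i j) + ∑ i, wpol i * (Ppol i j - PC i j) := by
    intro j
    have h0 : v j = (∑ i, wpol i * Ppol i j) - ∑ i, wC i * PC i j := by
      simp only [hv]; rw [hwpolstat j, hwCstat j]
    rw [h0, ← Finset.sum_add_distrib, ← Finset.sum_sub_distrib]
    apply Finset.sum_congr rfl; intro i _
    simp only [hv]; ring
  have Svbd : ∑ i, |v i| ≤ τ * (∑ i, |v i|) + rho P PC := by
    calc ∑ j, |v j|
        ≤ ∑ j, (|∑ i, v i * PC i j| + ∑ i, wpol i * |Ppol i j - PC i j|) := by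
          apply Finset.sum_le_sum; intro j _
          rw [hvstat j]
          refine (abs_add_le _ _).trans ?_
          apply add_le_add (le_refl _)
          refine (Finset.abs_sum_le_sum_abs _ _).trans ?_
          apply Finset.sum_le_sum; intro i _
          rw [abs_mul, abs_of_nonneg (hwpolnn i)]
      _ = (∑ j, |∑ i, v i * PC i j|) + ∑ j, ∑ i, wpol i * |Ppol i j - PC i j| :=
          Finset.sum_add_distrib
      _ ≤ τ * (∑ i, |v i|) + ∑ i, wpol i * ∑ j, |Ppol i j - PC i j| := by
          apply add_le_add contraction
          rw [Finset.sum_comm]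
          apply le_of_eq
          apply Finset.sum_congr rfl; intro i _
          rw [Finset.mul_sum]
      _ ≤ τ * (∑ i, |v i|) + ∑ i, wpol i * rho P PC := by
          apply add_le_add (le_refl _)
          apply Finset.sum_le_sum; intro i _
          exact mul_le_mul_of_nonneg_left (rowbd i) (hwpolnn i)
      _ = τ * (∑ i, |v i|) + rho P PC := by
          rw [← Finset.sum_mul, hwpolsum, one_mul]
  have hSv : ∑ i, |v i| ≤ rho P PC / (1 - τ) := by
    rw [le_div_iff₀ hτpos]
    nlinarith [Svbd]
  -- rbar bounds
  have hrbarge : ∀ s a, r s a ≤ rbar := by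
    intro s a; rw [hrbar]
    exact (le_ciSup (f := fun a => r s a) (bddA _) a).trans (le_ciSup (f := fun s => ⨆ a, r s a) (bddN _) s)
  have hrbar0 : 0 ≤ rbar := by
    obtain ⟨s⟩ := hNne; obtain ⟨a⟩ := hAne
    exact (hrnn s a).trans (hrbarge s a)
  -- final assembly
  have step1 : gpol ≤ ∑ s, wpol s * r s (piC s) := by
    rw [hgpol]
    apply Finset.sum_le_sum; intro s _
    apply mul_le_mul_of_nonneg_left _ (hwpolnn s)
    calc ∑ a, pol s a * r s a ≤ ∑ a, pol s a * r s (piC s) :=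
          Finset.sum_le_sum fun a _ =>
            mul_le_mul_of_nonneg_left (hmyopic s a) (hpolnn s a)
      _ = r s (piC s) := by rw [← Finset.sum_mul, hpolrow, one_mul]
  have step2 : gpol - gC ≤ ∑ s, v s * r s (piC s) := by
    have heq : ∑ s, v s * r s (piC s)
        = (∑ s, wpol s * r s (piC s)) - ∑ s, wC s * r s (piC s) := by
      rw [← Finset.sum_sub_distrib]
      apply Finset.sum_congr rfl; intro s _
      simp only [hv]; ring
    rw [hgC]; linarith [step1, heq.ge, heq.le]
  have step3 : ∑ s, v s * r s (piC s) ≤ rbar * ∑ s, |v s| := by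
    calc ∑ s, v s * r s (piC s) ≤ ∑ s, |v s| * rbar := by
          apply Finset.sum_le_sum; intro s _
          calc v s * r s (piC s) ≤ |v s| * r s (piC s) :=
                mul_le_mul_of_nonneg_right (le_abs_self _) (hrnn s (piC s))
            _ ≤ |v s| * rbar :=
                mul_le_mul_of_nonneg_left (hrbarge s (piC s)) (abs_nonneg _)
      _ = rbar * ∑ s, |v s| := by rw [← Finset.sum_mul]; ring
  calc gpol - gC ≤ rbar * ∑ s, |v s| := step2.trans step3
    _ ≤ rbar * (rho P PC / (1 - τ)) := mul_le_mul_of_nonneg_left hSv hrbar0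
    _ = rbar * rho P PC / (1 - τ) := (mul_div_assoc _ _ _).symm
end

section
/- For every row-stochastic N×N real matrix P, the supremum of ‖zᵀP‖₁ over all real row vectors z with ‖z‖₁ = 1 and Σ_i z_i = 0 equals (1/2)·max_{i,j} Σ_k |P_{ik} − P_{jk}|; in particular, for every z with Σ_i z_i = 0 one has ‖zᵀP‖₁ ≤ τ₁(P)·‖z‖₁, and this bound is attained for some z with ‖z‖₁ = 1 and Σ_i z_i = 0. -/
/-- The supremum of `‖zᵀP‖₁` over row vectors `z` with `‖z‖₁ = 1` and `Σᵢ zᵢ = 0`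
equals `τ₁(P)`: the bound `‖zᵀP‖₁ ≤ τ₁(P)·‖z‖₁` holds for every `z` with zero sum,
and is attained by some `z` with `‖z‖₁ = 1` and zero sum. -/
theorem tau1_is_sup {N : ℕ} (hN : 2 ≤ N) (P : Fin N → Fin N → ℝ)
    (hPnn : ∀ i k, 0 ≤ P i k) (hProw : ∀ i, ∑ k, P i k = 1) :
    (∀ z : Fin N → ℝ, ∑ i, z i = 0 →
      ∑ k, |∑ i, z i * P i k| ≤ tau1 P * ∑ i, |z i|) ∧
    (∃ z : Fin N → ℝ, (∑ i, |z i| = 1) ∧ (∑ i, z i = 0) ∧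
      ∑ k, |∑ i, z i * P i k| = tau1 P) := by
  classical
  haveI : NeZero N := ⟨by omega⟩
  set D : Fin N → Fin N → ℝ := fun i j => ∑ k, |P i k - P j k| with hDdef
  have hDnn : ∀ i j, 0 ≤ D i j := fun i j => Finset.sum_nonneg fun k _ => abs_nonneg _
  obtain ⟨p, hp⟩ := Finite.exists_max (fun q : Fin N × Fin N => D q.1 q.2)
  set M : ℝ := D p.1 p.2 with hMdef
  have hMax : ∀ i j, D i j ≤ M := fun i j => hp (i, j)
  have hMnn : 0 ≤ M := hDnn p.1 p.2
  have hsup : (⨆ i, ⨆ j, D i j) = M := by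
    apply le_antisymm
    · exact ciSup_le fun i => ciSup_le fun j => hMax i j
    · calc M = D p.1 p.2 := rfl
        _ ≤ ⨆ j, D p.1 j := le_ciSup (Set.Finite.bddAbove (Set.finite_range _)) p.2
        _ ≤ ⨆ i, ⨆ j, D i j := le_ciSup (f := fun i => ⨆ j, D i j) (Set.Finite.bddAbove (Set.finite_range _)) p.1
  have htau : tau1 P = (1/2) * M := by rw [tau1, ← hsup]
  constructor
  · -- upper bound
    intro z hz
    set a : Fin N → ℝ := fun i => max (z i) 0 with hadef
    set b : Fin N → ℝ := fun i => max (-z i) 0 with hbdef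
    have hann : ∀ i, 0 ≤ a i := fun i => le_max_right _ _
    have hbnn : ∀ i, 0 ≤ b i := fun i => le_max_right _ _
    have hab : ∀ i, z i = a i - b i := fun i => (max_zero_sub_eq_self (z i)).symm
    have habsab : ∀ i, |z i| = a i + b i := by
      intro i
      rcases le_total 0 (z i) with h | h
      · rw [abs_of_nonneg h, hadef, hbdef]
        simp [max_eq_left h, max_eq_right (neg_nonpos.mpr h)]
      · rw [abs_of_nonpos h, hadef, hbdef]
        simp [max_eq_right h, max_eq_left (neg_nonneg.mpr h)]
    set s : ℝ := ∑ i, a i with hsdef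
    have hsb : ∑ i, b i = s := by
      have h0 : ∑ i, (a i - b i) = 0 := by
        rw [← hz]; exact Finset.sum_congr rfl fun i _ => (hab i).symm
      rw [Finset.sum_sub_distrib] at h0
      linarith
    have habs : ∑ i, |z i| = 2 * s := by
      rw [Finset.sum_congr rfl fun i _ => habsab i, Finset.sum_add_distrib, hsb]
      ring
    have hsnn : 0 ≤ s := Finset.sum_nonneg fun i _ => hann i
    by_cases hs0 : s = 0
    · have hz0 : ∀ i, z i = 0 := by
        intro i
        have h1 : ∑ i, |z i| = 0 := by rw [habs, hs0]; ring
        have := (Finset.sum_eq_zero_iff_of_nonneg (fun i _ => abs_nonneg (z i))).mp h1 i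
          (Finset.mem_univ i)
        exact abs_eq_zero.mp this
      have : ∑ k, |∑ i, z i * P i k| = 0 := by
        apply Finset.sum_eq_zero
        intro k _
        rw [abs_eq_zero]
        exact Finset.sum_eq_zero fun i _ => by rw [hz0 i, zero_mul]
      rw [this, habs, hs0]
      rw [htau]; ring_nf; positivity
    · have hspos : 0 < s := lt_of_le_of_ne hsnn (Ne.symm hs0)
      have hk : ∀ k, (∑ i, z i * P i k) = (∑ i, ∑ j, a i * b j * (P i k - P j k)) / s := by
        intro k
        rw [eq_div_iff hs0]
        have expand : ∑ i, ∑ j, a i * b j * (P i k - P j k)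
            = (∑ i, a i * P i k) * s - s * (∑ j, b j * P j k) := by
          have e1 : ∑ i, ∑ j, (a i * b j * P i k) = (∑ i, a i * P i k) * (∑ j, b j) := by
            rw [Finset.sum_mul_sum]
            exact Finset.sum_congr rfl fun i _ => Finset.sum_congr rfl fun j _ => by ring
          have e2 : ∑ i, ∑ j, (a i * b j * P j k) = (∑ i, a i) * (∑ j, b j * P j k) := by
            rw [Finset.sum_mul_sum]
            exact Finset.sum_congr rfl fun i _ => Finset.sum_congr rfl fun j _ => by ring
          simp only [mul_sub, Finset.sum_sub_distrib]
          rw [e1, e2, hsb, ← hsdef]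
        rw [expand]
        have hzab : ∑ i, z i * P i k = ∑ i, a i * P i k - ∑ i, b i * P i k := by
          rw [← Finset.sum_sub_distrib]
          exact Finset.sum_congr rfl fun i _ => by rw [hab i]; ring
        rw [hzab]
        ring
      have step1 : ∀ k, |∑ i, z i * P i k| ≤ (∑ i, ∑ j, a i * b j * |P i k - P j k|) / s := by
        intro k
        rw [hk k, abs_div, abs_of_pos hspos]
        apply div_le_div_of_nonneg_right ?_ hspos.le
        calc |∑ i, ∑ j, a i * b j * (P i k - P j k)|
            ≤ ∑ i, |∑ j, a i * b j * (P i k - P j k)| := Finset.abs_sum_le_sum_abs _ _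
          _ ≤ ∑ i, ∑ j, a i * b j * |P i k - P j k| := by
              apply Finset.sum_le_sum
              intro i _
              calc |∑ j, a i * b j * (P i k - P j k)|
                  ≤ ∑ j, |a i * b j * (P i k - P j k)| := Finset.abs_sum_le_sum_abs _ _
                _ = ∑ j, a i * b j * |P i k - P j k| := by
                    apply Finset.sum_congr rfl
                    intro j _
                    rw [abs_mul, abs_mul, abs_of_nonneg (hann i), abs_of_nonneg (hbnn j)]
      calc ∑ k, |∑ i, z i * P i k|
          ≤ ∑ k, (∑ i, ∑ j, a i * b j * |P i k - P j k|) / s :=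
            Finset.sum_le_sum fun k _ => step1 k
        _ = (∑ i, ∑ j, a i * b j * D i j) / s := by
            rw [← Finset.sum_div]
            congr 1
            rw [Finset.sum_comm]
            apply Finset.sum_congr rfl
            intro i _
            rw [Finset.sum_comm]
            apply Finset.sum_congr rfl
            intro j _
            rw [← Finset.mul_sum]
        _ ≤ (∑ i, ∑ j, a i * b j * M) / s := by
            apply div_le_div_of_nonneg_right ?_ hspos.le
            apply Finset.sum_le_sum
            intro i _
            apply Finset.sum_le_sum
            intro j _
            exact mul_le_mul_of_nonneg_left (hMax i j) (mul_nonneg (hann i) (hbnn j))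
        _ = s * s * M / s := by
            congr 1
            have : ∀ i, ∑ j, a i * b j * M = a i * s * M := by
              intro i
              rw [← Finset.sum_mul, ← Finset.mul_sum, hsb]
            rw [Finset.sum_congr rfl fun i _ => this i, ← Finset.sum_mul, ← Finset.sum_mul]
        _ = tau1 P * ∑ i, |z i| := by
            rw [htau, habs]
            field_simp
  · -- attainment
    obtain ⟨i₀, j₀, hij, hDM⟩ : ∃ i₀ j₀ : Fin N, i₀ ≠ j₀ ∧ D i₀ j₀ = M := by
      by_cases hpq : p.1 = p.2
      · have hM0 : M = 0 := by
          rw [hMdef, hpq]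
          simp [hDdef]
        refine ⟨⟨0, by omega⟩, ⟨1, by omega⟩, by simp [Fin.ext_iff], ?_⟩
        have h1 := hMax ⟨0, by omega⟩ ⟨1, by omega⟩
        have h2 := hDnn (⟨0, by omega⟩ : Fin N) ⟨1, by omega⟩
        linarith
      · exact ⟨p.1, p.2, hpq, rfl⟩
    refine ⟨fun i => (if i = i₀ then (1:ℝ) else 0) / 2 - (if i = j₀ then 1 else 0) / 2, ?_, ?_, ?_⟩
    · have : ∀ i, |(if i = i₀ then (1:ℝ) else 0) / 2 - (if i = j₀ then 1 else 0) / 2|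
          = (if i = i₀ then (1:ℝ) else 0) / 2 + (if i = j₀ then 1 else 0) / 2 := by
        intro i
        rcases eq_or_ne i i₀ with h1 | h1
        · subst h1
          simp only [if_pos rfl, if_neg hij]
          norm_num
        · rcases eq_or_ne i j₀ with h2 | h2
          · subst h2
            simp only [if_pos rfl, if_neg h1]
            rw [abs_of_nonpos (by norm_num)]
            norm_num
          · simp only [if_neg h1, if_neg h2]
            norm_num
      rw [Finset.sum_congr rfl fun i _ => this i, Finset.sum_add_distrib,
        ← Finset.sum_div, ← Finset.sum_div]
      simp [Finset.sum_ite_eq']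
      norm_num
    · rw [Finset.sum_sub_distrib, ← Finset.sum_div, ← Finset.sum_div]
      simp [Finset.sum_ite_eq']
    · have hzk : ∀ k, ∑ i, ((if i = i₀ then (1:ℝ) else 0) / 2 - (if i = j₀ then 1 else 0) / 2) * P i k
          = (P i₀ k - P j₀ k) / 2 := by
        intro k
        have : ∀ i, ((if i = i₀ then (1:ℝ) else 0) / 2 - (if i = j₀ then 1 else 0) / 2) * P i k
            = ((if i = i₀ then P i k else 0) - (if i = j₀ then P i k else 0)) / 2 := by
          intro i
          rcases eq_or_ne i i₀ with h1 | h1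
          · subst h1
            simp [if_neg hij]
            try ring
          · rcases eq_or_ne i j₀ with h2 | h2
            · subst h2
              simp [if_neg h1]
              try ring
            · simp [if_neg h1, if_neg h2]
              try ring
        rw [Finset.sum_congr rfl fun i _ => this i, ← Finset.sum_div, Finset.sum_sub_distrib]
        simp [Finset.sum_ite_eq']
      rw [Finset.sum_congr rfl fun k _ => by rw [hzk k]]
      have : ∀ k, |(P i₀ k - P j₀ k) / 2| = |P i₀ k - P j₀ k| / 2 := by
        intro k
        rw [abs_div]
        norm_num
      rw [Finset.sum_congr rfl fun k _ => this k, ← Finset.sum_div, htau]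
      rw [show (∑ k, |P i₀ k - P j₀ k|) = D i₀ j₀ from rfl, hDM]
      ring
end

section
/- Let P be a row-stochastic N×N real matrix. Then τ₁(P) < 1 if and only if P is scrambling, i.e. no two rows of P are orthogonal: for every pair of row indices i, j there exists a column k with P_{ik} > 0 and P_{jk} > 0. -/
/-- `τ₁(P) < 1` iff `P` is scrambling: no two rows are orthogonal. -/
theorem tau1_lt_one_iff_scrambling {N : ℕ} [NeZero N] (P : Fin N → Fin N → ℝ)
    (hPnn : ∀ i k, 0 ≤ P i k) (hProw : ∀ i, ∑ k, P i k = 1) :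
    tau1 P < 1 ↔ ∀ i j : Fin N, ∃ k, 0 < P i k ∧ 0 < P j k := by
  have hne : Nonempty (Fin N) := Fin.pos_iff_nonempty.mp (NeZero.pos N)
  set S : Fin N → Fin N → ℝ := fun i j => ∑ k, |P i k - P j k| with hS
  have key : ∀ i j, S i j = 2 - 2 * ∑ k, min (P i k) (P j k) := by
    intro i j
    have : ∀ k, |P i k - P j k| = P i k + P j k - 2 * min (P i k) (P j k) := by
      intro k
      rcases le_total (P i k) (P j k) with h | h
      · rw [abs_of_nonpos (by linarith), min_eq_left h]; ring
      · rw [abs_of_nonneg (by linarith), min_eq_right h]; ring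
    simp only [hS, this, Finset.sum_sub_distrib, Finset.sum_add_distrib, hProw,
      ← Finset.mul_sum]
    ring
  have hlt2 : ∀ i j, (S i j < 2 ↔ ∃ k, 0 < P i k ∧ 0 < P j k) := by
    intro i j
    rw [key]
    constructor
    · intro h
      have hpos : 0 < ∑ k, min (P i k) (P j k) := by linarith
      obtain ⟨k, _, hk⟩ := Finset.exists_lt_of_sum_lt (f := fun _ => (0:ℝ))
        (by simpa using hpos)
      exact ⟨k, lt_min_iff.mp hk |>.1, lt_min_iff.mp hk |>.2⟩
    · rintro ⟨k, h1, h2⟩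
      have hpos : 0 < ∑ k, min (P i k) (P j k) :=
        Finset.sum_pos' (fun k _ => le_min (hPnn i k) (hPnn j k))
          ⟨k, Finset.mem_univ k, lt_min h1 h2⟩
      linarith
  have hbdd : ∀ i, BddAbove (Set.range (S i)) := fun i => Set.Finite.bddAbove (Set.finite_range _)
  have hbdd2 : BddAbove (Set.range fun i => ⨆ j, S i j) := Set.Finite.bddAbove (Set.finite_range _)
  have hiff : tau1 P < 1 ↔ (⨆ i, ⨆ j, S i j) < 2 := by
    unfold tau1; constructor <;> intro h <;> linarith
  rw [hiff]
  constructor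
  · intro h i j
    rw [← hlt2]
    calc S i j ≤ ⨆ j, S i j := le_ciSup (hbdd i) j
      _ ≤ ⨆ i, ⨆ j, S i j := le_ciSup hbdd2 i
      _ < 2 := h
  · intro h
    obtain ⟨i0, hi0⟩ := exists_eq_ciSup_of_finite (f := fun i => ⨆ j, S i j)
    obtain ⟨j0, hj0⟩ := exists_eq_ciSup_of_finite (f := fun j => S i0 j)
    rw [← hi0, ← hj0]
    exact (hlt2 i0 j0).mpr (h i0 j0)
end

section
/- Let P be a row-stochastic N×N real matrix with τ₁(P) < 1, and let E be a real N×N matrix such that P + E is also row-stochastic. Let w be a stationary distribution of P and w' a stationary distribution of P + E. Then ‖w − w'‖₁ ≤ ‖E‖_∞ / (1 − τ₁(P)), where ‖E‖_∞ = max_i Σ_j |E_{ij}|. -/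
lemma hsup_tau1 {N : ℕ} (P : Fin N → Fin N → ℝ) (i j : Fin N) :
    ∑ k, |P i k - P j k| ≤ 2 * tau1 P := by
  have h1 : ∑ k, |P i k - P j k| ≤ ⨆ j, ∑ k, |P i k - P j k| :=
    le_ciSup (f := fun j => ∑ k, |P i k - P j k|)
      (Set.Finite.bddAbove (Set.finite_range _)) j
  have h2 : (⨆ j, ∑ k, |P i k - P j k|) ≤ ⨆ i, ⨆ j, ∑ k, |P i k - P j k| :=
    le_ciSup (f := fun i => ⨆ j, ∑ k, |P i k - P j k|)
      (Set.Finite.bddAbove (Set.finite_range _)) i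
  unfold tau1; linarith

lemma tau1_nonneg {N : ℕ} [NeZero N] (P : Fin N → Fin N → ℝ) : 0 ≤ tau1 P := by
  have i : Fin N := ⟨0, Nat.pos_of_ne_zero (NeZero.ne N)⟩
  have h := hsup_tau1 P i i
  have h0 : (0:ℝ) ≤ ∑ k, |P i k - P i k| :=
    Finset.sum_nonneg fun k _ => abs_nonneg _
  linarith

/-- Contraction property of the ergodicity coefficient. -/
lemma tau1_contract {N : ℕ} [NeZero N] (P : Fin N → Fin N → ℝ)
    (d : Fin N → ℝ) (hd : ∑ i, d i = 0) :
    ∑ k, |∑ i, d i * P i k| ≤ tau1 P * ∑ i, |d i| := by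
  set a : Fin N → ℝ := fun i => max (d i) 0 with ha
  set b : Fin N → ℝ := fun i => max (-(d i)) 0 with hb
  have hab : ∀ i, d i = a i - b i := by
    intro i; simp only [ha, hb]
    rcases le_total (d i) 0 with h | h
    · rw [max_eq_right h, max_eq_left (by linarith)]; ring
    · rw [max_eq_left h, max_eq_right (by linarith)]; ring
  have habs : ∀ i, |d i| = a i + b i := by
    intro i; simp only [ha, hb]
    rcases le_total (d i) 0 with h | h
    · rw [abs_of_nonpos h, max_eq_right h, max_eq_left (by linarith)]; ring
    · rw [abs_of_nonneg h, max_eq_left h, max_eq_right (by linarith)]; ring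
  have hannn : ∀ i, 0 ≤ a i := fun i => le_max_right _ _
  have hbnn : ∀ i, 0 ≤ b i := fun i => le_max_right _ _
  set m : ℝ := ∑ i, a i with hm
  have hmb : ∑ i, b i = m := by
    have h0 : ∑ i, (a i - b i) = ∑ i, d i :=
      Finset.sum_congr rfl fun i _ => (hab i).symm
    rw [hd, Finset.sum_sub_distrib] at h0; linarith
  have hm0 : 0 ≤ m := Finset.sum_nonneg fun i _ => hannn i
  have habsum : ∑ i, |d i| = 2 * m := by
    rw [Finset.sum_congr rfl fun i _ => habs i, Finset.sum_add_distrib, hmb]; ring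
  -- key identity
  have key : ∀ k, m * (∑ i, d i * P i k) =
      ∑ i, ∑ j, a i * b j * (P i k - P j k) := by
    intro k
    have e1 : ∀ i, ∑ j, a i * b j * (P i k - P j k)
        = a i * P i k * (∑ j, b j) - a i * ∑ j, b j * P j k := by
      intro i
      rw [Finset.mul_sum, Finset.mul_sum, ← Finset.sum_sub_distrib]
      exact Finset.sum_congr rfl fun j _ => by ring
    have e2 : ∑ i, d i * P i k = (∑ i, a i * P i k) - (∑ j, b j * P j k) := by
      rw [← Finset.sum_sub_distrib]
      exact Finset.sum_congr rfl fun i _ => by rw [hab i]; ring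
    calc m * ∑ i, d i * P i k
        = (∑ i, a i * P i k) * (∑ j, b j) - (∑ i, a i) * (∑ j, b j * P j k) := by
          rw [hmb, ← hm, e2]; ring
      _ = ∑ i, (a i * P i k * (∑ j, b j) - a i * ∑ j, b j * P j k) := by
          rw [Finset.sum_sub_distrib, ← Finset.sum_mul, ← Finset.sum_mul]
      _ = ∑ i, ∑ j, a i * b j * (P i k - P j k) :=
          Finset.sum_congr rfl fun i _ => (e1 i).symm
  have step : m * ∑ k, |∑ i, d i * P i k| ≤ 2 * tau1 P * m * m := by
    calc m * ∑ k, |∑ i, d i * P i k|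
        = ∑ k, |m * ∑ i, d i * P i k| := by
          rw [Finset.mul_sum]
          exact Finset.sum_congr rfl fun k _ => by
            rw [abs_mul, abs_of_nonneg hm0]
      _ = ∑ k, |∑ i, ∑ j, a i * b j * (P i k - P j k)| := by
          exact Finset.sum_congr rfl fun k _ => by rw [key k]
      _ ≤ ∑ k, ∑ i, ∑ j, a i * b j * |P i k - P j k| := by
          refine Finset.sum_le_sum fun k _ => ?_
          refine (Finset.abs_sum_le_sum_abs _ _).trans ?_
          refine Finset.sum_le_sum fun i _ => ?_
          refine (Finset.abs_sum_le_sum_abs _ _).trans ?_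
          refine Finset.sum_le_sum fun j _ => ?_
          rw [abs_mul, abs_of_nonneg (mul_nonneg (hannn i) (hbnn j))]
      _ = ∑ i, ∑ j, a i * b j * ∑ k, |P i k - P j k| := by
          rw [Finset.sum_comm]
          refine Finset.sum_congr rfl fun i _ => ?_
          rw [Finset.sum_comm]
          refine Finset.sum_congr rfl fun j _ => ?_
          rw [Finset.mul_sum]
      _ ≤ ∑ i, ∑ j, a i * b j * (2 * tau1 P) := by
          refine Finset.sum_le_sum fun i _ => Finset.sum_le_sum fun j _ => ?_
          exact mul_le_mul_of_nonneg_left (hsup_tau1 P i j)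
            (mul_nonneg (hannn i) (hbnn j))
      _ = 2 * tau1 P * m * m := by
          simp only [← Finset.sum_mul, ← Finset.mul_sum, hmb, ← hm]
          ring
  rcases eq_or_lt_of_le hm0 with hmz | hmpos
  · -- m = 0 : every d i = 0
    have hdz : ∀ i, d i = 0 := by
      intro i
      have h1 : ∑ i, |d i| = 0 := by rw [habsum, ← hmz]; ring
      have h2 : |d i| = 0 :=
        (Finset.sum_eq_zero_iff_of_nonneg (fun i _ => abs_nonneg _)).1 h1 i (Finset.mem_univ i)
      exact abs_eq_zero.1 h2
    have : ∀ k, (∑ i, d i * P i k) = 0 := fun k =>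
      Finset.sum_eq_zero fun i _ => by rw [hdz i]; ring
    simp only [this, abs_zero, Finset.sum_const_zero]
    exact mul_nonneg (tau1_nonneg P) (Finset.sum_nonneg fun i _ => abs_nonneg _)
  · have := (mul_le_mul_iff_right₀ hmpos).1 (by linarith [step] : m * ∑ k, |∑ i, d i * P i k| ≤ m * (2 * tau1 P * m))
    rw [habsum]; nlinarith

/-- Perturbation bound for stationary distributions (Seneta):
`‖w − w'‖₁ ≤ ‖E‖_∞ / (1 − τ₁(P))`. -/
theorem stationary_perturbation_bound {N : ℕ} [NeZero N]
    (P E : Fin N → Fin N → ℝ)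
    (hPnn : ∀ i j, 0 ≤ P i j) (hProw : ∀ i, ∑ j, P i j = 1)
    (hPEnn : ∀ i j, 0 ≤ P i j + E i j) (hPErow : ∀ i, ∑ j, (P i j + E i j) = 1)
    (htau : tau1 P < 1)
    (w : Fin N → ℝ) (hwnn : ∀ i, 0 ≤ w i) (hwsum : ∑ i, w i = 1)
    (hwstat : ∀ j, ∑ i, w i * P i j = w j)
    (w' : Fin N → ℝ) (hw'nn : ∀ i, 0 ≤ w' i) (hw'sum : ∑ i, w' i = 1)
    (hw'stat : ∀ j, ∑ i, w' i * (P i j + E i j) = w' j) :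
    ∑ i, |w i - w' i| ≤ (⨆ i, ∑ j, |E i j|) / (1 - tau1 P) := by
  set S : ℝ := ⨆ i, ∑ j, |E i j| with hS
  have hSle : ∀ i, ∑ j, |E i j| ≤ S := fun i =>
    le_ciSup (f := fun i => ∑ j, |E i j|)
      (Set.Finite.bddAbove (Set.finite_range _)) i
  have hS0 : 0 ≤ S := by
    have i : Fin N := ⟨0, Nat.pos_of_ne_zero (NeZero.ne N)⟩
    exact le_trans (Finset.sum_nonneg fun j _ => abs_nonneg _) (hSle i)
  set d : Fin N → ℝ := fun i => w i - w' i with hdd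
  have hdsum : ∑ i, d i = 0 := by
    simp only [hdd, Finset.sum_sub_distrib, hwsum, hw'sum]; ring
  have hdk : ∀ k, d k = (∑ i, d i * P i k) - (∑ i, w' i * E i k) := by
    intro k
    have h1 : ∑ i, d i * P i k = w k - ∑ i, w' i * P i k := by
      simp only [hdd, sub_mul]
      rw [Finset.sum_sub_distrib, hwstat k]
    have h2 : ∑ i, w' i * P i k + ∑ i, w' i * E i k = w' k := by
      rw [← Finset.sum_add_distrib, ← hw'stat k]
      exact Finset.sum_congr rfl fun i _ => by ring
    simp only [hdd]; linarith
  have hE : ∑ k, |∑ i, w' i * E i k| ≤ S := by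
    calc ∑ k, |∑ i, w' i * E i k|
        ≤ ∑ k, ∑ i, w' i * |E i k| := by
          refine Finset.sum_le_sum fun k _ => ?_
          refine (Finset.abs_sum_le_sum_abs _ _).trans ?_
          exact Finset.sum_le_sum fun i _ => by
            rw [abs_mul, abs_of_nonneg (hw'nn i)]
      _ = ∑ i, w' i * ∑ k, |E i k| := by
          rw [Finset.sum_comm]
          exact Finset.sum_congr rfl fun i _ => (Finset.mul_sum _ _ _).symm
      _ ≤ ∑ i, w' i * S := Finset.sum_le_sum fun i _ =>
            mul_le_mul_of_nonneg_left (hSle i) (hw'nn i)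
      _ = S := by rw [← Finset.sum_mul, hw'sum, one_mul]
  have hcontract := tau1_contract P d hdsum
  have hmain : ∑ i, |d i| ≤ tau1 P * ∑ i, |d i| + S := by
    calc ∑ i, |d i| = ∑ k, |(∑ i, d i * P i k) - (∑ i, w' i * E i k)| :=
          Finset.sum_congr rfl fun k _ => by rw [← hdk k]
      _ ≤ ∑ k, (|∑ i, d i * P i k| + |∑ i, w' i * E i k|) :=
          Finset.sum_le_sum fun k _ => abs_sub _ _
      _ = ∑ k, |∑ i, d i * P i k| + ∑ k, |∑ i, w' i * E i k| :=
          Finset.sum_add_distrib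
      _ ≤ tau1 P * ∑ i, |d i| + S := add_le_add hcontract hE
  have hpos : 0 < 1 - tau1 P := by linarith
  rw [le_div_iff₀ hpos]
  have : ∑ i, |w i - w' i| = ∑ i, |d i| := rfl
  rw [this]; nlinarith
end

section
/- Let Z be a row-stochastic N×N real matrix with stationary distribution w, and let q be any probability row vector (nonnegative entries summing to 1). Then ‖q − qZ‖₁ ≥ (1 − τ₁(Z))·‖q − w‖₁. -/
lemma pairwise_le_tau {N : ℕ} [NeZero N] (Z : Fin N → Fin N → ℝ) (i j : Fin N) :
    ∑ k, |Z i k - Z j k| ≤ 2 * tau1 Z := by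
  have h1 : BddAbove (Set.range fun j => ∑ k, |Z i k - Z j k|) :=
    (Set.finite_range _).bddAbove
  have h2 : BddAbove (Set.range fun i => ⨆ j, ∑ k, |Z i k - Z j k|) :=
    (Set.finite_range _).bddAbove
  have hA := le_ciSup h1 j
  have hB := le_ciSup h2 i
  unfold tau1
  linarith

/-- Contraction of a zero-sum vector by a matrix. -/
lemma zero_sum_contraction {N : ℕ} [NeZero N] (Z : Fin N → Fin N → ℝ)
    (v : Fin N → ℝ) (hv : ∑ i, v i = 0) :
    ∑ k, |∑ i, v i * Z i k| ≤ tau1 Z * ∑ i, |v i| := by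
  set p : Fin N → ℝ := fun i => max (v i) 0 with hp
  set m : Fin N → ℝ := fun i => max (-v i) 0 with hm
  have hpnn : ∀ i, 0 ≤ p i := fun i => le_max_right _ _
  have hmnn : ∀ i, 0 ≤ m i := fun i => le_max_right _ _
  have hpm : ∀ i, p i - m i = v i := by
    intro i; rcases le_total (v i) 0 with h | h
    · simp [hp, hm, max_eq_right h, max_eq_left (neg_nonneg.2 h)]
    · simp [hp, hm, max_eq_left h, max_eq_right (neg_nonpos.2 h)]
  have habs : ∀ i, |v i| = p i + m i := by
    intro i; rcases le_total (v i) 0 with h | h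
    · simp [hp, hm, abs_of_nonpos h, max_eq_right h, max_eq_left (neg_nonneg.2 h)]
    · simp [hp, hm, abs_of_nonneg h, max_eq_left h, max_eq_right (neg_nonpos.2 h)]
  set c : ℝ := ∑ i, p i with hc
  have hcnn : 0 ≤ c := Finset.sum_nonneg fun i _ => hpnn i
  have hmc : ∑ i, m i = c := by
    have : ∑ i, (p i - m i) = 0 := by rw [Finset.sum_congr rfl fun i _ => hpm i]; exact hv
    rw [Finset.sum_sub_distrib] at this
    linarith
  have hS : ∑ i, |v i| = 2 * c := by
    rw [Finset.sum_congr rfl fun i _ => habs i, Finset.sum_add_distrib, hmc]; ring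
  rcases eq_or_lt_of_le hcnn with hc0 | hcpos
  · -- c = 0, so v = 0
    have hv0 : ∀ i, v i = 0 := by
      intro i
      have h1 : p i = 0 := by
        have := Finset.sum_eq_zero_iff_of_nonneg (fun i _ => hpnn i) |>.mp hc0.symm
        exact this i (Finset.mem_univ i)
      have h2 : m i = 0 := by
        have := Finset.sum_eq_zero_iff_of_nonneg (fun i _ => hmnn i) |>.mp (hmc.trans hc0.symm)
        exact this i (Finset.mem_univ i)
      rw [← hpm i, h1, h2]; ring
    simp [hv0]
  · -- main case
    have key : ∀ k, c * (∑ i, v i * Z i k) = ∑ i, ∑ j, p i * m j * (Z i k - Z j k) := by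
      intro k
      have : ∀ i, ∑ j, p i * m j * (Z i k - Z j k)
          = c * (p i * Z i k) - p i * ∑ j, m j * Z j k := by
        intro i
        have h1 : c * (p i * Z i k) = ∑ j, m j * (p i * Z i k) := by
          rw [← Finset.sum_mul, hmc]
        rw [h1, Finset.mul_sum, ← Finset.sum_sub_distrib]
        exact Finset.sum_congr rfl fun j _ => by ring
      rw [Finset.sum_congr rfl fun i _ => this i, Finset.sum_sub_distrib,
        ← Finset.mul_sum, ← Finset.sum_mul]
      have hvpm : ∑ i, v i * Z i k = ∑ i, p i * Z i k - ∑ i, m i * Z i k := by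
        rw [← Finset.sum_sub_distrib]
        exact Finset.sum_congr rfl fun i _ => by rw [← hpm i]; ring
      rw [hvpm]; ring
    have bound : c * ∑ k, |∑ i, v i * Z i k| ≤ c * (tau1 Z * (2 * c)) := by
      calc c * ∑ k, |∑ i, v i * Z i k| = ∑ k, |c * ∑ i, v i * Z i k| := by
            rw [Finset.mul_sum]
            exact Finset.sum_congr rfl fun k _ => by
              rw [abs_mul, abs_of_nonneg hcnn]
        _ = ∑ k, |∑ i, ∑ j, p i * m j * (Z i k - Z j k)| := by
            exact Finset.sum_congr rfl fun k _ => by rw [key k]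
        _ ≤ ∑ k, ∑ i, ∑ j, p i * m j * |Z i k - Z j k| := by
            refine Finset.sum_le_sum fun k _ => ?_
            refine (Finset.abs_sum_le_sum_abs _ _).trans ?_
            refine Finset.sum_le_sum fun i _ => ?_
            refine (Finset.abs_sum_le_sum_abs _ _).trans ?_
            refine Finset.sum_le_sum fun j _ => ?_
            rw [abs_mul, abs_of_nonneg (mul_nonneg (hpnn i) (hmnn j))]
        _ = ∑ i, ∑ j, p i * m j * ∑ k, |Z i k - Z j k| := by
            rw [Finset.sum_comm]
            refine Finset.sum_congr rfl fun i _ => ?_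
            rw [Finset.sum_comm]
            refine Finset.sum_congr rfl fun j _ => ?_
            rw [Finset.mul_sum]
        _ ≤ ∑ i, ∑ j, p i * m j * (2 * tau1 Z) := by
            refine Finset.sum_le_sum fun i _ => Finset.sum_le_sum fun j _ => ?_
            exact mul_le_mul_of_nonneg_left (pairwise_le_tau Z i j)
              (mul_nonneg (hpnn i) (hmnn j))
        _ = c * (tau1 Z * (2 * c)) := by
            simp only [← Finset.sum_mul, ← Finset.mul_sum]
            rw [hmc]; ring
    have := (mul_le_mul_iff_right₀ hcpos).mp bound
    rw [hS]; linarith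

/-- For a row-stochastic `Z` with stationary distribution `w` and any probability
vector `q`, `‖q − qZ‖₁ ≥ (1 − τ₁(Z))·‖q − w‖₁`. -/
theorem one_step_contraction_lower_bound {N : ℕ} [NeZero N]
    (Z : Fin N → Fin N → ℝ)
    (hZnn : ∀ i k, 0 ≤ Z i k) (hZrow : ∀ i, ∑ k, Z i k = 1)
    (w : Fin N → ℝ) (hwnn : ∀ i, 0 ≤ w i) (hwsum : ∑ i, w i = 1)
    (hwstat : ∀ k, ∑ i, w i * Z i k = w k)
    (q : Fin N → ℝ) (hqnn : ∀ i, 0 ≤ q i) (hqsum : ∑ i, q i = 1) :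
    (1 - tau1 Z) * ∑ i, |q i - w i| ≤ ∑ k, |q k - ∑ i, q i * Z i k| := by
  set v : Fin N → ℝ := fun i => q i - w i with hv
  have hvsum : ∑ i, v i = 0 := by
    simp only [hv, Finset.sum_sub_distrib, hqsum, hwsum]; ring
  have hrew : ∀ k, q k - ∑ i, q i * Z i k = v k - ∑ i, v i * Z i k := by
    intro k
    have : ∑ i, q i * Z i k = ∑ i, v i * Z i k + w k := by
      rw [← hwstat k, ← Finset.sum_add_distrib]
      exact Finset.sum_congr rfl fun i _ => by simp [hv]; ring
    rw [this]; simp [hv]; ring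
  have contr := zero_sum_contraction Z v hvsum
  have lower : ∑ i, |v i| - ∑ k, |∑ i, v i * Z i k| ≤ ∑ k, |v k - ∑ i, v i * Z i k| := by
    rw [← Finset.sum_sub_distrib]
    refine Finset.sum_le_sum fun k _ => ?_
    exact abs_sub_abs_le_abs_sub _ _
  calc (1 - tau1 Z) * ∑ i, |v i|
      = ∑ i, |v i| - tau1 Z * ∑ i, |v i| := by ring
    _ ≤ ∑ i, |v i| - ∑ k, |∑ i, v i * Z i k| := by linarith
    _ ≤ ∑ k, |v k - ∑ i, v i * Z i k| := lower
    _ = ∑ k, |q k - ∑ i, q i * Z i k| :=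
        Finset.sum_congr rfl fun k _ => by rw [hrew k]
end

section
/- Let M be a finite MDP with N states and A actions, let ε ∈ (0,1], and let π be a Markov randomized policy with π_a(s) ≥ ε/A for all states s and actions a. Let P_E(s' | s) = Σ_a π_a(s)·P(s' | s, a) be the induced transition matrix, let w be a stationary distribution of P_E with smallest component w̲ = min_s w(s), and define θ = max_{s',s,a,b} |P(s' | s, a) − P(s' | s, b)|. Define G := 2·Σ_{s,a} π_a(s)·w(s)·Σ_{s' : P(s'|s,a) > 0} P(s' | s, a)·ln( P(s' | s, a) / P_E(s' | s) ) (every term with P(s' | s, a) = 0 contributes 0; note P_E(s' | s) > 0 whenever P(s' | s, a) > 0 since π_a(s) > 0). Then G ≥ (ε·θ² / (4A)) · w̲. -/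
lemma aux_log_le_half {t : ℝ} (ht : 1 ≤ t) : Real.log t ≤ (t - 1/t)/2 := by
  have hmono : MonotoneOn (fun x : ℝ => (x - x⁻¹)/2 - Real.log x) (Set.Ici 1) := by
    have hd : ∀ x ∈ interior (Set.Ici (1:ℝ)),
        HasDerivAt (fun x : ℝ => (x - x⁻¹)/2 - Real.log x) ((x-1)^2/(2*x^2)) x := by
      intro x hx
      rw [interior_Ici] at hx
      have hx0 : x ≠ 0 := by have : (1:ℝ) < x := hx; linarith
      have h1 : HasDerivAt (fun x : ℝ => (x - x⁻¹)/2 - Real.log x)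
          ((1 - -(x^2)⁻¹)/2 - x⁻¹) x := by
        exact (((hasDerivAt_id x).sub (hasDerivAt_inv hx0)).div_const 2).sub
          (Real.hasDerivAt_log hx0)
      convert h1 using 1
      have : (1:ℝ) < x := hx
      field_simp
      ring
    apply monotoneOn_of_deriv_nonneg (convex_Ici 1)
    · apply ContinuousOn.sub
      · fun_prop (disch := intro x hx; have : (1:ℝ) ≤ x := hx; intro h; simp_all; linarith)
      · apply Real.continuousOn_log.mono
        intro x hx
        have : (1:ℝ) ≤ x := hx
        simp; linarith
    · intro x hx
      exact (hd x hx).differentiableAt.differentiableWithinAt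
    · intro x hx
      rw [(hd x hx).deriv]
      positivity
  have h0 : (0:ℝ) ≤ (t - t⁻¹)/2 - Real.log t := by
    have := hmono (Set.self_mem_Ici) (show t ∈ Set.Ici (1:ℝ) from ht) ht
    simpa using this
  rw [one_div]; linarith

lemma aux_log_le_quad {t : ℝ} (h0 : 0 < t) (h1 : t ≤ 1) :
    Real.log t ≤ (t-1) - (t-1)^2/2 := by
  have hanti : AntitoneOn (fun x : ℝ => (x-1) - (x-1)^2/2 - Real.log x) (Set.Ioi 0) := by
    have hd : ∀ x ∈ interior (Set.Ioi (0:ℝ)),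
        HasDerivAt (fun x : ℝ => (x-1) - (x-1)^2/2 - Real.log x) (-((x-1)^2/x)) x := by
      intro x hx
      rw [interior_Ioi] at hx
      have hx0 : x ≠ 0 := ne_of_gt hx
      have h1 : HasDerivAt (fun x : ℝ => (x-1) - (x-1)^2/2 - Real.log x)
          ((1 - (2*(x-1)^1*1)/2) - x⁻¹) x := by
        have hsq : HasDerivAt (fun x : ℝ => (x-1)^2) (2*(x-1)^1*1) x :=
          ((hasDerivAt_id x).sub_const 1).pow 2
        exact (((hasDerivAt_id x).sub_const 1).sub (hsq.div_const 2)).sub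
          (Real.hasDerivAt_log hx0)
      convert h1 using 1
      field_simp
      ring
    apply antitoneOn_of_deriv_nonpos (convex_Ioi 0)
    · apply ContinuousOn.sub
      · fun_prop
      · apply Real.continuousOn_log.mono
        intro x hx
        have : (0:ℝ) < x := hx
        simp; linarith
    · intro x hx
      exact (hd x hx).differentiableAt.differentiableWithinAt
    · intro x hx
      rw [(hd x hx).deriv]
      have hx' : (0:ℝ) < x := by rw [interior_Ioi] at hx; exact hx
      have : 0 ≤ (x-1)^2/x := by positivity
      linarith
  have := hanti (Set.mem_Ioi.2 h0) (Set.mem_Ioi.2 one_pos) h1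
  simp at this
  linarith

lemma pt_bound {p q : ℝ} (hp0 : 0 ≤ p) (hp1 : p ≤ 1) (hq0 : 0 < q) (hq1 : q ≤ 1) :
    (p - q) + (p - q)^2/2 ≤ p * Real.log (p / q) := by
  rcases eq_or_lt_of_le hp0 with h|h
  · rw [← h]; simp; nlinarith
  · have hlog : Real.log (p/q) = - Real.log (q/p) := by
      rw [← Real.log_inv]
      congr 1
      rw [inv_div]
    rcases le_total q p with hle|hle
    · have ht0 : 0 < q/p := div_pos hq0 h
      have ht1 : q/p ≤ 1 := (div_le_one h).2 hle
      have hkey := aux_log_le_quad ht0 ht1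
      have he1 : p * ((q/p - 1) - (q/p - 1)^2/2) = (q - p) - (q - p)^2/(2*p) := by
        field_simp
      have hle2 : p * Real.log (q/p) ≤ (q - p) - (q - p)^2/(2*p) := by
        rw [← he1]
        exact mul_le_mul_of_nonneg_left hkey hp0
      have hle3 : (q - p)^2/2 ≤ (q - p)^2/(2*p) := by
        apply div_le_div_of_nonneg_left (sq_nonneg _) (by linarith)
        linarith
      rw [hlog]
      nlinarith
    · have ht : 1 ≤ q/p := (one_le_div h).2 hle
      have hkey := aux_log_le_half ht
      rw [one_div_div] at hkey
      have hle2 : p * Real.log (q/p) ≤ p * ((q/p - p/q)/2) :=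
        mul_le_mul_of_nonneg_left hkey hp0
      have he1 : p * ((q/p - p/q)/2) = (q - p^2/q)/2 := by
        field_simp
      have he2 : (p^2/q - q)/2 - ((p - q) + (p - q)^2/2) = (p - q)^2*(1 - q)/(2*q) := by
        field_simp
        ring
      have hnn : 0 ≤ (p - q)^2*(1 - q)/(2*q) := by
        have : 0 ≤ 1 - q := by linarith
        positivity
      rw [hlog]
      nlinarith

/-- Lower bound on the expected log-likelihood-ratio rate `G`:
`G ≥ (ε·θ²/(4A))·w̲`. Terms with `P(s'|s,a) = 0` contribute `0` to the inner sum
(in Lean, `0 * Real.log 0 = 0`). -/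
theorem G_lower_bound {N A : ℕ} [NeZero N] [NeZero A]
    (P : Fin A → Fin N → Fin N → ℝ)
    (hPnn : ∀ a s s', 0 ≤ P a s s')
    (hProw : ∀ a s, ∑ s', P a s s' = 1)
    (ε : ℝ) (hε0 : 0 < ε) (hε1 : ε ≤ 1)
    (pol : Fin N → Fin A → ℝ)
    (hpolnn : ∀ s a, 0 ≤ pol s a) (hpolrow : ∀ s, ∑ a, pol s a = 1)
    (hexplore : ∀ s a, ε / A ≤ pol s a)
    (PE : Fin N → Fin N → ℝ)
    (hPE : ∀ s s', PE s s' = ∑ a, pol s a * P a s s')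
    (w : Fin N → ℝ) (hwnn : ∀ s, 0 ≤ w s) (hwsum : ∑ s, w s = 1)
    (hwstat : ∀ s', ∑ s, w s * PE s s' = w s')
    (wlow : ℝ) (hwlow : wlow = ⨅ s, w s)
    (θ : ℝ) (hθ : θ = ⨆ s', ⨆ s, ⨆ a, ⨆ b, |P a s s' - P b s s'|)
    (G : ℝ)
    (hG : G = 2 * ∑ s, ∑ a, pol s a * w s *
      ∑ s', P a s s' * Real.log (P a s s' / PE s s')) :
    ε * θ ^ 2 / (4 * A) * wlow ≤ G := by
  have hA : (0:ℝ) < (A:ℝ) := by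
    exact_mod_cast Nat.pos_of_ne_zero (NeZero.ne A)
  -- basic facts about PE
  have hPEnn : ∀ s s', 0 ≤ PE s s' := by
    intro s s'
    rw [hPE]
    exact Finset.sum_nonneg fun a _ => mul_nonneg (hpolnn s a) (hPnn a s s')
  have hPErow : ∀ s, ∑ s', PE s s' = 1 := by
    intro s
    simp_rw [hPE]
    rw [Finset.sum_comm]
    simp_rw [← Finset.mul_sum, hProw, mul_one]
    exact hpolrow s
  have hPEle1 : ∀ s s', PE s s' ≤ 1 := by
    intro s s'
    calc PE s s' ≤ ∑ t, PE s t :=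
          Finset.single_le_sum (fun t _ => hPEnn s t) (Finset.mem_univ s')
      _ = 1 := hPErow s
  have hPle1 : ∀ a s s', P a s s' ≤ 1 := by
    intro a s s'
    calc P a s s' ≤ ∑ t, P a s t :=
          Finset.single_le_sum (fun t _ => hPnn a s t) (Finset.mem_univ s')
      _ = 1 := hProw a s
  have hPEpos : ∀ a s s', 0 < P a s s' → 0 < PE s s' := by
    intro a s s' hp
    have : pol s a * P a s s' ≤ PE s s' := by
      rw [hPE]
      exact Finset.single_le_sum
        (fun b _ => mul_nonneg (hpolnn s b) (hPnn b s s')) (Finset.mem_univ a)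
    have hpos : 0 < pol s a := lt_of_lt_of_le (by positivity) (hexplore s a)
    nlinarith
  -- per-term bound
  have hterm : ∀ a s s', (P a s s' - PE s s') + (P a s s' - PE s s')^2/2 ≤
      P a s s' * Real.log (P a s s' / PE s s') := by
    intro a s s'
    rcases eq_or_lt_of_le (hPnn a s s') with hz | hz
    · rw [← hz]
      simp
      nlinarith [hPEnn s s', hPEle1 s s']
    · exact pt_bound (hPnn a s s') (hPle1 a s s') (hPEpos a s s' hz) (hPEle1 s s')
  -- KL lower bound via a single coordinate
  have hKL : ∀ a s i, (P a s i - PE s i)^2/2 ≤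
      ∑ s', P a s s' * Real.log (P a s s' / PE s s') := by
    intro a s i
    calc (P a s i - PE s i)^2/2
        ≤ ∑ s', (P a s s' - PE s s')^2/2 :=
          Finset.single_le_sum (f := fun t => (P a s t - PE s t)^2/2)
            (fun t _ => by positivity) (Finset.mem_univ i)
      _ = ∑ s', ((P a s s' - PE s s') + (P a s s' - PE s s')^2/2) := by
          rw [Finset.sum_add_distrib]
          simp_rw [Finset.sum_sub_distrib, hProw, hPErow]
          ring
      _ ≤ ∑ s', P a s s' * Real.log (P a s s' / PE s s') :=
          Finset.sum_le_sum fun t _ => hterm a s t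
  have hKL0 : ∀ a s, 0 ≤ ∑ s', P a s s' * Real.log (P a s s' / PE s s') := by
    intro a s
    have i : Fin N := Classical.arbitrary _
    exact le_trans (by positivity) (hKL a s i)
  -- extract maximizers for θ
  obtain ⟨s'0, hs'0⟩ := exists_eq_ciSup_of_finite
    (f := fun s' => ⨆ s, ⨆ a, ⨆ b, |P a s s' - P b s s'|)
  obtain ⟨s0, hs0⟩ := exists_eq_ciSup_of_finite
    (f := fun s => ⨆ a, ⨆ b, |P a s s'0 - P b s s'0|)
  obtain ⟨a0, ha0⟩ := exists_eq_ciSup_of_finite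
    (f := fun a => ⨆ b, |P a s0 s'0 - P b s0 s'0|)
  obtain ⟨b0, hb0⟩ := exists_eq_ciSup_of_finite
    (f := fun b => |P a0 s0 s'0 - P b s0 s'0|)
  have hθeq : θ = |P a0 s0 s'0 - P b0 s0 s'0| := by
    rw [hθ, ← hs'0, ← hs0, ← ha0, ← hb0]
  have hθnn : 0 ≤ θ := hθeq ▸ abs_nonneg _
  -- one of a0, b0 is far from PE
  have htri : θ ≤ |P a0 s0 s'0 - PE s0 s'0| + |P b0 s0 s'0 - PE s0 s'0| := by
    rw [hθeq]
    calc |P a0 s0 s'0 - P b0 s0 s'0|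
        = |(P a0 s0 s'0 - PE s0 s'0) - (P b0 s0 s'0 - PE s0 s'0)| := by ring_nf
      _ ≤ _ := abs_sub _ _
  obtain ⟨c, hc⟩ : ∃ c, θ/2 ≤ |P c s0 s'0 - PE s0 s'0| := by
    rcases le_total (|P a0 s0 s'0 - PE s0 s'0|) (|P b0 s0 s'0 - PE s0 s'0|) with h|h
    · exact ⟨b0, by linarith⟩
    · exact ⟨a0, by linarith⟩
  have hsq : θ^2/8 ≤ (P c s0 s'0 - PE s0 s'0)^2/2 := by
    have h1 : (θ/2)^2 ≤ |P c s0 s'0 - PE s0 s'0|^2 := by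
      apply pow_le_pow_left₀ (by positivity) hc
    rw [sq_abs] at h1
    nlinarith
  have hKLc : θ^2/8 ≤ ∑ s', P c s0 s' * Real.log (P c s0 s' / PE s0 s') :=
    le_trans hsq (hKL c s0 s'0)
  -- wlow facts
  have hwlow_le : wlow ≤ w s0 := by
    rw [hwlow]
    exact ciInf_le (Finite.bddBelow_range _) s0
  have hwlow_nn : 0 ≤ wlow := by
    rw [hwlow]
    exact le_ciInf hwnn
  -- assemble
  set KL : Fin A → Fin N → ℝ :=
    fun a s => ∑ s', P a s s' * Real.log (P a s s' / PE s s') with hKLdef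
  have hinner : ∀ s, 0 ≤ ∑ a, pol s a * w s * KL a s := by
    intro s
    exact Finset.sum_nonneg fun a _ =>
      mul_nonneg (mul_nonneg (hpolnn s a) (hwnn s)) (hKL0 a s)
  have hstep1 : pol s0 c * w s0 * KL c s0 ≤ ∑ s, ∑ a, pol s a * w s * KL a s := by
    calc pol s0 c * w s0 * KL c s0
        ≤ ∑ a, pol s0 a * w s0 * KL a s0 :=
          Finset.single_le_sum (fun a _ =>
            mul_nonneg (mul_nonneg (hpolnn s0 a) (hwnn s0)) (hKL0 a s0))
            (Finset.mem_univ c)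
      _ ≤ ∑ s, ∑ a, pol s a * w s * KL a s :=
          Finset.single_le_sum (fun s _ => hinner s) (Finset.mem_univ s0)
  have hstep2 : (ε/A) * wlow * (θ^2/8) ≤ pol s0 c * w s0 * KL c s0 := by
    have h1 : (ε/A) * wlow ≤ pol s0 c * w s0 :=
      mul_le_mul (hexplore s0 c) hwlow_le hwlow_nn
        (le_trans (le_of_lt (by positivity)) (hexplore s0 c))
    exact mul_le_mul h1 hKLc (by positivity)
      (mul_nonneg (le_trans (le_of_lt (by positivity)) (hexplore s0 c)) (hwnn s0))
  have hfinal : ε * θ^2 / (4*A) * wlow = 2 * ((ε/A) * wlow * (θ^2/8)) := by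
    field_simp
    ring
  rw [hG, hfinal]
  have : (∑ s, ∑ a, pol s a * w s * ∑ s', P a s s' * Real.log (P a s s' / PE s s'))
      = ∑ s, ∑ a, pol s a * w s * KL a s := rfl
  rw [this]
  linarith
end

section
/- Let m : {1,…,N} × {1,…,N} → ℕ be transition counts, let n(s) = Σ_{s'} m(s', s), and suppose n(s) ≥ 1 for every s with some m(s', s) > 0. Then for every family p of probability vectors p(· | s) on {1,…,N} (i.e. p(s' | s) ≥ 0 and Σ_{s'} p(s' | s) = 1 for each s), the likelihood satisfies ∏_{s',s} p(s' | s)^{m(s',s)} ≤ ∏_{s',s : m(s',s) > 0} ( m(s', s)/n(s) )^{m(s',s)}, with the convention 0⁰ = 1. That is, the empirical transition frequencies m(s', s)/n(s) are maximum-likelihood estimates of the Markov chain transition probabilities. -/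
/-- Per-column MLE inequality. -/
lemma col_mle {k : ℕ} (m : Fin k → ℕ) (q : Fin k → ℝ)
    (hq : ∀ i, 0 ≤ q i) (hsum : ∑ i, q i ≤ 1)
    (n : ℕ) (hn : (n : ℕ) = ∑ i, m i) :
    ∏ i, q i ^ m i ≤ ∏ i, (if 0 < m i then ((m i : ℝ) / (n : ℝ)) ^ m i else 1) := by
  by_cases hall : ∀ i, m i = 0
  · simp [hall]
  · push_neg at hall
    obtain ⟨i₀, hi₀⟩ := hall
    have hnpos : 0 < n := by
      rw [hn]
      exact Finset.sum_pos' (fun i _ => Nat.zero_le _)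
        ⟨i₀, Finset.mem_univ _, Nat.pos_of_ne_zero hi₀⟩
    have hnR : (0:ℝ) < n := by exact_mod_cast hnpos
    have hRHSnn : 0 ≤ ∏ i, (if 0 < m i then ((m i : ℝ) / (n : ℝ)) ^ m i else 1) := by
      apply Finset.prod_nonneg
      intro i _
      split
      · positivity
      · norm_num
    by_cases hz0 : ∃ i, 0 < m i ∧ q i = 0
    · obtain ⟨i, hmi, hqi⟩ := hz0
      calc ∏ i, q i ^ m i = 0 := by
            apply Finset.prod_eq_zero (Finset.mem_univ i)
            rw [hqi]; exact zero_pow hmi.ne'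
        _ ≤ _ := hRHSnn
    · push_neg at hz0
      have hqpos : ∀ i, 0 < m i → 0 < q i := fun i hi =>
        lt_of_le_of_ne (hq i) (Ne.symm (hz0 i hi))
      set w : Fin k → ℝ := fun i => (m i : ℝ) / n with hw_def
      set z : Fin k → ℝ := fun i => if m i = 0 then 0 else q i * n / m i with hz_def
      have hwnn : ∀ i ∈ Finset.univ, 0 ≤ w i := fun i _ => by positivity
      have hw1 : ∑ i, w i = 1 := by
        rw [hw_def]
        rw [← Finset.sum_div]
        rw [div_eq_one_iff_eq hnR.ne']
        rw [hn]; push_cast; ring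
      have hznn : ∀ i ∈ Finset.univ, 0 ≤ z i := by
        intro i _
        rw [hz_def]
        dsimp only
        have := hq i
        split <;> positivity
      have hG := Real.geom_mean_le_arith_mean_weighted Finset.univ w z hwnn hw1 hznn
      have hsum' : ∑ i, w i * z i ≤ 1 := by
        have heq : ∀ i, w i * z i = if m i = 0 then 0 else q i := by
          intro i
          rw [hw_def, hz_def]
          dsimp only
          by_cases hm : m i = 0
          · simp [hm]
          · rw [if_neg hm, if_neg hm]
            have hmR : (0:ℝ) < m i := by exact_mod_cast Nat.pos_of_ne_zero hm
            field_simp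
        calc ∑ i, w i * z i = ∑ i, (if m i = 0 then 0 else q i) :=
              Finset.sum_congr rfl fun i _ => heq i
          _ ≤ ∑ i, q i := Finset.sum_le_sum fun i _ => by
              split
              exacts [hq i, le_refl _]
          _ ≤ 1 := hsum
      have hGle1 : ∏ i, z i ^ w i ≤ 1 := le_trans hG hsum'
      have hGnn : 0 ≤ ∏ i, z i ^ w i :=
        Finset.prod_nonneg fun i hi => Real.rpow_nonneg (hznn i hi) _
      have hGpow : (∏ i, z i ^ w i) ^ n ≤ 1 := pow_le_one₀ hGnn hGle1
      have hkey : ∏ i, q i ^ m i =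
          (∏ i, z i ^ w i) ^ n * ∏ i, (if 0 < m i then ((m i : ℝ) / (n : ℝ)) ^ m i else 1) := by
        rw [← Finset.prod_pow, ← Finset.prod_mul_distrib]
        apply Finset.prod_congr rfl
        intro i _
        rw [hw_def, hz_def]
        dsimp only
        by_cases hm : m i = 0
        · simp [hm]
        · have hmpos : 0 < m i := Nat.pos_of_ne_zero hm
          have hmR : (0:ℝ) < m i := by exact_mod_cast hmpos
          rw [if_neg hm, if_pos hmpos]
          have hqi := hq i
          have hznn' : (0:ℝ) ≤ q i * n / m i := by positivity
          have hexp : (m i : ℝ) / n * n = m i := by field_simp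
          rw [← Real.rpow_natCast ((q i * ↑n / ↑(m i)) ^ ((m i : ℝ)/n)) n,
            ← Real.rpow_mul hznn', hexp, Real.rpow_natCast, ← mul_pow]
          congr 1
          field_simp
      rw [hkey]
      calc (∏ i, z i ^ w i) ^ n * ∏ i, (if 0 < m i then ((m i : ℝ) / (n : ℝ)) ^ m i else 1)
          ≤ 1 * ∏ i, (if 0 < m i then ((m i : ℝ) / (n : ℝ)) ^ m i else 1) :=
            mul_le_mul_of_nonneg_right hGpow hRHSnn
        _ = _ := one_mul _

/-- The empirical transition frequencies `m(s',s)/n(s)` are maximum-likelihood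
estimates of Markov chain transition probabilities: the likelihood of any
transition-probability family `p` is at most that of the empirical one
(with the convention `0⁰ = 1`). -/
theorem empirical_frequencies_are_MLE {N : ℕ}
    (m : Fin N → Fin N → ℕ)
    (n : Fin N → ℕ) (hn : ∀ s, n s = ∑ s', m s' s)
    (hpos : ∀ s, (∃ s', 0 < m s' s) → 1 ≤ n s)
    (p : Fin N → Fin N → ℝ)
    (hpnn : ∀ s' s, 0 ≤ p s' s) (hprow : ∀ s, ∑ s', p s' s = 1) :
    ∏ s', ∏ s, p s' s ^ m s' s ≤
      ∏ s', ∏ s,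
        (if 0 < m s' s then ((m s' s : ℝ) / (n s : ℝ)) ^ m s' s else 1) := by
  rw [Finset.prod_comm (f := fun s' s => p s' s ^ m s' s),
    Finset.prod_comm (f := fun s' s =>
      (if 0 < m s' s then ((m s' s : ℝ) / (n s : ℝ)) ^ m s' s else 1))]
  apply Finset.prod_le_prod
  · intro s _
    exact Finset.prod_nonneg fun s' _ => pow_nonneg (hpnn s' s) _
  · intro s _
    exact col_mle (fun s' => m s' s) (fun s' => p s' s) (fun s' => hpnn s' s)
      (le_of_eq (hprow s)) (n s) (hn s)
end
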